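/- Let Γ be a locally compact second countable group acting continuously on a locally compact second countable space X preserving a Radon measure λ, and μ a probability measure on Γ whose support generates Γ as a closed group. Suppose ψ ∈ L²(X, λ) satisfies P_μ ψ = ψ λ-a.e., where P_μ ψ(x) = ∫_Γ ψ(gx) dμ(g). Then ψ is Γ-invariant: for every g ∈ Γ, ψ ∘ g = ψ λ-almost everywhere. -/

import Mathlib

open MeasureTheory Filter Set
open scoped symmDiff ENNReal

private lemma key_symmdiff_tendsto
    {X : Type*} [TopologicalSpace X] [MeasurableSpace X] [OpensMeasurableSpace X]
    {Γ : Type*} [Group Γ] [MulAction Γ X]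
    (lam : Measure X)
    (hinv : ∀ g : Γ, MeasurePreserving (fun x : X => g • x) lam lam)
    {gs : ℕ → Γ} {g : Γ}
    (hconv : ∀ x : X, Tendsto (fun n => gs n • x) atTop (nhds (g • x)))
    {U : Set X} (hU : IsOpen U) (hUfin : lam U ≠ ∞) :
    Tendsto (fun n => lam (((fun x => gs n • x) ⁻¹' U) ∆ ((fun x => g • x) ⁻¹' U)))
      atTop (nhds 0) := by
  set s0 : Set X := (fun x => g • x) ⁻¹' U with hs0
  set s : ℕ → Set X := fun n => (fun x => gs n • x) ⁻¹' U with hs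
  have hs0m : MeasurableSet s0 := (hinv g).measurable hU.measurableSet
  have hsm : ∀ n, MeasurableSet (s n) := fun n => (hinv (gs n)).measurable hU.measurableSet
  have hs0fin : lam s0 ≠ ∞ := by
    rw [hs0, (hinv g).measure_preimage hU.measurableSet.nullMeasurableSet]; exact hUfin
  -- (a) lam (s0 \ s n) → 0
  have ha : Tendsto (fun n => lam (s0 \ s n)) atTop (nhds 0) := by
    have h0 : (0 : ℝ≥0∞) = ∫⁻ x, (0 : ℝ≥0∞) ∂lam := by simp
    rw [h0]
    have := tendsto_lintegral_of_dominated_convergence (μ := lam)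
      (F := fun n => (s0 \ s n).indicator (1 : X → ℝ≥0∞)) (f := fun _ => 0)
      (s0.indicator 1)
      (fun n => measurable_const.indicator (hs0m.diff (hsm n)))
      (fun n => Filter.Eventually.of_forall
        (Set.indicator_le_indicator_of_subset diff_subset (fun _ => zero_le)))
      (by rw [lintegral_indicator_one hs0m]; exact hs0fin)
      ?_
    · convert this using 1
      ext n
      rw [lintegral_indicator_one (hs0m.diff (hsm n))]
    · refine Filter.Eventually.of_forall fun x => ?_
      by_cases hx : x ∈ s0
      · have : ∀ᶠ n in atTop, x ∈ s n := by
          exact (hconv x).eventually (hU.mem_nhds hx)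
        refine Tendsto.congr' ?_ tendsto_const_nhds
        filter_upwards [this] with n hn
        simp [Set.indicator_of_notMem, hn]
      · refine Tendsto.congr' ?_ tendsto_const_nhds
        refine Filter.Eventually.of_forall fun n => ?_
        have : x ∉ s0 \ s n := fun h => hx h.1
        simp [Set.indicator_of_notMem this]
  -- (b) lam (s n \ s0) = lam (s0 \ s n)
  have hb : ∀ n, lam (s n \ s0) = lam (s0 \ s n) := by
    intro n
    have h1 : lam (s n \ s0) + lam (s n ∩ s0) = lam (s n) := measure_diff_add_inter _ hs0m
    have h2 : lam (s0 \ s n) + lam (s0 ∩ s n) = lam s0 := measure_diff_add_inter _ (hsm n)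
    have heq : lam (s n) = lam s0 := by
      rw [hs, hs0, (hinv (gs n)).measure_preimage hU.measurableSet.nullMeasurableSet,
        (hinv g).measure_preimage hU.measurableSet.nullMeasurableSet]
    have hfin : lam (s n ∩ s0) ≠ ∞ := by
      refine ne_top_of_le_ne_top hs0fin (measure_mono inter_subset_right)
    rw [Set.inter_comm] at h2
    have : lam (s n \ s0) + lam (s n ∩ s0) = lam (s0 \ s n) + lam (s n ∩ s0) := by
      rw [h1, h2, heq]
    exact (ENNReal.add_left_inj hfin).mp this
  -- combine
  have hsum : Tendsto (fun n => lam (s n \ s0) + lam (s0 \ s n)) atTop (nhds 0) := by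
    have : Tendsto (fun n => lam (s0 \ s n) + lam (s0 \ s n)) atTop (nhds (0 + 0)) :=
      ha.add ha
    rw [add_zero] at this
    refine this.congr fun n => by rw [hb n]
  refine tendsto_of_tendsto_of_tendsto_of_le_of_le tendsto_const_nhds hsum
    (fun n => zero_le) (fun n => ?_)
  calc lam (s n ∆ s0) ≤ lam (s n \ s0) + lam (s0 \ s n) := by
        rw [Set.symmDiff_def]; exact measure_union_le _ _
private lemma key_tendsto
    {X : Type*} [TopologicalSpace X] [MeasurableSpace X] [OpensMeasurableSpace X]
    {Γ : Type*} [Group Γ] [MulAction Γ X]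
    (lam : Measure X) [lam.OuterRegular]
    (hinv : ∀ g : Γ, MeasurePreserving (fun x : X => g • x) lam lam)
    {gs : ℕ → Γ} {g : Γ}
    (hconv : ∀ x : X, Tendsto (fun n => gs n • x) atTop (nhds (g • x)))
    (hsd : ∀ (U : Set X), IsOpen U → lam U ≠ ∞ →
      Tendsto (fun n => lam (((fun x => gs n • x) ⁻¹' U) ∆ ((fun x => g • x) ⁻¹' U)))
        atTop (nhds 0))
    (Φ : Lp ℝ 2 lam) :
    Tendsto (fun n => Lp.compMeasurePreserving _ (hinv (gs n)) Φ) atTop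
      (nhds (Lp.compMeasurePreserving _ (hinv g) Φ)) := by
  haveI : Fact ((1 : ℝ≥0∞) ≤ 2) := ⟨one_le_two⟩
  have hdist : ∀ (h : Γ) (Φ₁ Φ₂ : Lp ℝ 2 lam),
      dist (Lp.compMeasurePreserving _ (hinv h) Φ₁) (Lp.compMeasurePreserving _ (hinv h) Φ₂)
        = dist Φ₁ Φ₂ := fun h Φ₁ Φ₂ => (Lp.isometry_compMeasurePreserving (hinv h)).dist_eq Φ₁ Φ₂
  -- the set of good Φ is closed
  have hclosed : IsClosed {Φ : Lp ℝ 2 lam |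
      Tendsto (fun n => Lp.compMeasurePreserving _ (hinv (gs n)) Φ) atTop
        (nhds (Lp.compMeasurePreserving _ (hinv g) Φ))} := by
    refine isClosed_of_closure_subset fun Φ hΦ => ?_
    rw [Set.mem_setOf_eq, Metric.tendsto_atTop]
    intro ε hε
    obtain ⟨Φ', hΦ'P, hd⟩ := Metric.mem_closure_iff.mp hΦ (ε / 3) (by linarith)
    obtain ⟨N, hN⟩ := Metric.tendsto_atTop.mp hΦ'P (ε / 3) (by linarith)
    refine ⟨N, fun n hn => ?_⟩
    calc dist (Lp.compMeasurePreserving _ (hinv (gs n)) Φ)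
          (Lp.compMeasurePreserving _ (hinv g) Φ)
        ≤ dist (Lp.compMeasurePreserving _ (hinv (gs n)) Φ)
            (Lp.compMeasurePreserving _ (hinv (gs n)) Φ')
          + dist (Lp.compMeasurePreserving _ (hinv (gs n)) Φ')
            (Lp.compMeasurePreserving _ (hinv g) Φ')
          + dist (Lp.compMeasurePreserving _ (hinv g) Φ')
            (Lp.compMeasurePreserving _ (hinv g) Φ) := dist_triangle4 _ _ _ _
      _ < ε / 3 + ε / 3 + ε / 3 := by
          refine add_lt_add (add_lt_add ?_ (hN n hn)) ?_
          · rw [hdist]; exact hd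
          · rw [hdist, dist_comm]; exact hd
      _ = ε := by ring
  -- induction on Φ
  refine Lp.induction (by norm_num : (2 : ℝ≥0∞) ≠ ∞)
    (fun Φ : Lp ℝ 2 lam =>
      Tendsto (fun n => Lp.compMeasurePreserving _ (hinv (gs n)) Φ) atTop
        (nhds (Lp.compMeasurePreserving _ (hinv g) Φ)))
    ?_ ?_ hclosed Φ
  · -- indicator functions
    intro c s hsm hμs
    simp only [Lp.simpleFunc.coe_indicatorConst]
    -- step 1 : open sets
    have hopen : ∀ (U : Set X) (hU : IsOpen U) (hUfin : lam U ≠ ∞),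
        Tendsto (fun n => Lp.compMeasurePreserving _ (hinv (gs n))
            (indicatorConstLp 2 hU.measurableSet hUfin c)) atTop
          (nhds (Lp.compMeasurePreserving _ (hinv g)
            (indicatorConstLp 2 hU.measurableSet hUfin c))) := by
      intro U hU hUfin
      simp only [Lp.indicatorConstLp_compMeasurePreserving]
      exact tendsto_indicatorConstLp_set (by norm_num) (hsd U hU hUfin)
    -- step 2 : approximate s from outside by open sets
    have hex : ∀ n : ℕ, ∃ U, s ⊆ U ∧ IsOpen U ∧ lam U < lam s + (n : ℝ≥0∞)⁻¹ := by
      intro n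
      obtain ⟨U, hU1, hU2, hU3⟩ := Set.exists_isOpen_lt_of_lt s (lam s + (n : ℝ≥0∞)⁻¹)
        (ENNReal.lt_add_right hμs.ne (ENNReal.inv_ne_zero.mpr (ENNReal.natCast_ne_top n)))
      exact ⟨U, hU1, hU2, hU3⟩
    choose U hUs hUo hUlt using hex
    have hUfin : ∀ n, lam (U n) ≠ ∞ := fun n => (hUlt n).ne_top
    have hdiff : ∀ n : ℕ, lam (U n ∆ s) ≤ (n : ℝ≥0∞)⁻¹ := by
      intro n
      rw [symmDiff_of_ge (hUs n), measure_diff (hUs n) hsm.nullMeasurableSet hμs.ne]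
      exact tsub_le_iff_right.mpr (by rw [add_comm]; exact (hUlt n).le)
    have htend : Tendsto (fun n => lam (U n ∆ s)) atTop (nhds 0) :=
      tendsto_of_tendsto_of_tendsto_of_le_of_le tendsto_const_nhds
        ENNReal.tendsto_inv_nat_nhds_zero (fun n => zero_le) hdiff
    have hindlim : Tendsto (fun n => indicatorConstLp 2 (hUo n).measurableSet (hUfin n) c)
        atTop (nhds (indicatorConstLp 2 hsm hμs.ne c)) :=
      tendsto_indicatorConstLp_set (by norm_num) htend
    refine hclosed.mem_of_tendsto hindlim ?_
    exact Eventually.of_forall fun n => hopen (U n) (hUo n) (hUfin n)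
  · -- additivity
    intro f₁ f₂ hf₁ hf₂ _ h₁ h₂
    simp only [map_add]
    exact h₁.add h₂


open MeasureTheory

/-- If `ψ ∈ L²(X, λ)` is fixed by the Markov operator `P_μ` of a measure-preserving
action, and the support of `μ` generates `Γ` as a closed group, then `ψ` is
invariant under every element of `Γ` (up to `λ`-null sets). -/
theorem markov_fixed_implies_invariant
    {X : Type*} [TopologicalSpace X] [LocallyCompactSpace X]
    [SecondCountableTopology X] [MeasurableSpace X] [BorelSpace X]
    {Γ : Type*} [Group Γ] [TopologicalSpace Γ] [IsTopologicalGroup Γ]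
    [LocallyCompactSpace Γ] [SecondCountableTopology Γ]
    [MeasurableSpace Γ] [BorelSpace Γ]
    [MulAction Γ X] [ContinuousSMul Γ X]
    (lam : Measure X) [lam.Regular]
    (hinv : ∀ g : Γ, MeasurePreserving (fun x : X => g • x) lam lam)
    (μ : Measure Γ) [IsProbabilityMeasure μ]
    (hgen : (Subgroup.closure {g : Γ | ∀ U ∈ nhds g, μ U ≠ 0}).topologicalClosure = ⊤)
    (ψ : X → ℝ) (hψ : MemLp ψ 2 lam)
    (hfix : (fun x => ∫ g, ψ (g • x) ∂μ) =ᵐ[lam] ψ) :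
    ∀ g : Γ, (fun x => ψ (g • x)) =ᵐ[lam] ψ := by
  haveI : Fact ((1 : ℝ≥0∞) ≤ 2) := ⟨one_le_two⟩
  haveI : SigmaFinite lam := by
    exact sigmaFinite_of_locallyFinite (μ := lam)
  set Ψ : Lp ℝ 2 lam := hψ.toLp ψ with hΨdef
  have hΨcoe : (Ψ : X → ℝ) =ᵐ[lam] ψ := hψ.coeFn_toLp
  set T : Γ → Lp ℝ 2 lam → Lp ℝ 2 lam :=
    fun h Φ => Lp.compMeasurePreserving _ (hinv h) Φ with hTdef
  have hTcoe : ∀ (h : Γ) (Φ : Lp ℝ 2 lam), (T h Φ : X → ℝ) =ᵐ[lam] fun x => Φ (h • x) :=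
    fun h Φ => Lp.coeFn_compMeasurePreserving Φ (hinv h)
  have hcompae : ∀ (h : Γ) {f f' : X → ℝ}, f =ᵐ[lam] f' →
      (fun x => f (h • x)) =ᵐ[lam] fun x => f' (h • x) := fun h f f' hf =>
    (hinv h).quasiMeasurePreserving.ae_eq_comp hf
  have hTpsi : ∀ h : Γ, (T h Ψ : X → ℝ) =ᵐ[lam] fun x => ψ (h • x) :=
    fun h => (hTcoe h Ψ).trans (hcompae h hΨcoe)
  have hbridge : ∀ h : Γ, (T h Ψ = Ψ) ↔ (fun x => ψ (h • x)) =ᵐ[lam] ψ := by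
    intro h
    constructor
    · intro he
      have h2 : (T h Ψ : X → ℝ) =ᵐ[lam] Ψ := by rw [he]
      exact ((hTpsi h).symm.trans h2).trans hΨcoe
    · intro he
      exact Lp.ext ((hTpsi h).trans (he.trans hΨcoe.symm))
  have hTmul : ∀ (a b : Γ) (Φ : Lp ℝ 2 lam), T (a * b) Φ = T b (T a Φ) := by
    intro a b Φ
    refine Lp.ext ((hTcoe (a * b) Φ).trans (Filter.EventuallyEq.trans ?_
      (((hTcoe b (T a Φ)).trans (hcompae b (hTcoe a Φ))).symm)))
    refine Filter.EventuallyEq.of_eq (funext fun x => ?_)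
    rw [mul_smul]
  have hTone : T 1 Ψ = Ψ := by
    refine Lp.ext ((hTcoe 1 Ψ).trans ?_)
    refine Filter.EventuallyEq.of_eq (funext fun x => ?_)
    rw [one_smul]
  -- measurable representative
  obtain ⟨ψ', hψ'sm, heq⟩ : ∃ ψ', StronglyMeasurable ψ' ∧ ψ =ᵐ[lam] ψ' :=
    ⟨hψ.1.mk ψ, hψ.1.stronglyMeasurable_mk, hψ.1.ae_eq_mk⟩
  have hπm : Measurable (fun p : Γ × X => p.1 • p.2) := continuous_smul.measurable
  have hπ : MeasurePreserving (fun p : Γ × X => p.1 • p.2) (μ.prod lam) lam := by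
    refine ⟨hπm, ?_⟩
    refine Measure.ext fun s hs => ?_
    rw [Measure.map_apply hπm hs, Measure.prod_apply (hπm hs)]
    have hfib : ∀ g : Γ, lam (Prod.mk g ⁻¹' ((fun p : Γ × X => p.1 • p.2) ⁻¹' s)) = lam s := by
      intro g
      have : (Prod.mk g ⁻¹' ((fun p : Γ × X => p.1 • p.2) ⁻¹' s)) = (fun x => g • x) ⁻¹' s := rfl
      rw [this, (hinv g).measure_preimage hs.nullMeasurableSet]
    simp only [hfib]
    simp
  have hsnd : MeasurePreserving (Prod.snd : Γ × X → X) (μ.prod lam) lam := by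
    refine ⟨measurable_snd, ?_⟩
    simp [Measure.map_snd_prod]
  have hψ' : MemLp ψ' 2 lam := hψ.ae_eq heq
  have hsq : Integrable (fun x => ψ' x ^ 2) lam := hψ'.integrable_sq
  have hF'int : Integrable (fun p : Γ × X => ψ' (p.1 • p.2) * ψ' p.2) (μ.prod lam) := by
    have hm1 : AEStronglyMeasurable (fun p : Γ × X => ψ' (p.1 • p.2)) (μ.prod lam) :=
      (hψ'sm.comp_measurable hπm).aestronglyMeasurable
    have hm2 : AEStronglyMeasurable (fun p : Γ × X => ψ' p.2) (μ.prod lam) :=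
      (hψ'sm.comp_measurable measurable_snd).aestronglyMeasurable
    have hint1 : Integrable (fun p : Γ × X => ψ' (p.1 • p.2) ^ 2) (μ.prod lam) :=
      (hπ.integrable_comp hsq.aestronglyMeasurable).mpr hsq
    have hint2 : Integrable (fun p : Γ × X => ψ' p.2 ^ 2) (μ.prod lam) :=
      (hsnd.integrable_comp hsq.aestronglyMeasurable).mpr hsq
    refine Integrable.mono' (hint1.add hint2) (hm1.mul hm2)
      (Filter.Eventually.of_forall fun p => ?_)
    simp only [Pi.add_apply]
    rw [Real.norm_eq_abs, abs_mul]
    nlinarith [sq_nonneg (|ψ' (p.1 • p.2)| - |ψ' p.2|), sq_abs (ψ' (p.1 • p.2)),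
      sq_abs (ψ' p.2), abs_nonneg (ψ' (p.1 • p.2)), abs_nonneg (ψ' p.2)]
  have hFF' : (fun p : Γ × X => ψ (p.1 • p.2) * ψ p.2) =ᵐ[μ.prod lam]
      (fun p => ψ' (p.1 • p.2) * ψ' p.2) := by
    have h1 : (fun p : Γ × X => ψ (p.1 • p.2)) =ᵐ[μ.prod lam] fun p => ψ' (p.1 • p.2) :=
      hπ.quasiMeasurePreserving.ae_eq_comp heq
    have h2 : (fun p : Γ × X => ψ p.2) =ᵐ[μ.prod lam] fun p => ψ' p.2 :=
      hsnd.quasiMeasurePreserving.ae_eq_comp heq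
    exact h1.mul h2
  have hFint : Integrable (fun p : Γ × X => ψ (p.1 • p.2) * ψ p.2) (μ.prod lam) :=
    hF'int.congr hFF'.symm
  -- inner products
  have hinner : ∀ h : Γ, (inner ℝ (T h Ψ) Ψ : ℝ) = ∫ x, ψ (h • x) * ψ x ∂lam := by
    intro h
    rw [L2.inner_def]
    refine integral_congr_ae ?_
    filter_upwards [hTpsi h, hΨcoe] with x h1 h2
    rw [h1, h2]
    simp [RCLike.inner_apply]; ring
  have hJint : Integrable (fun h : Γ => (inner ℝ (T h Ψ) Ψ : ℝ)) μ :=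
    hFint.integral_prod_left.congr (Filter.Eventually.of_forall fun h => (hinner h).symm)
  have hnormsq : ∫ x, ψ x * ψ x ∂lam = ‖Ψ‖ ^ 2 := by
    rw [← real_inner_self_eq_norm_sq Ψ, L2.inner_def]
    refine (integral_congr_ae ?_).symm
    filter_upwards [hΨcoe] with x h1
    rw [h1]
    simp [RCLike.inner_apply]; ring
  have key1 : ∫ h, (inner ℝ (T h Ψ) Ψ : ℝ) ∂μ = ‖Ψ‖ ^ 2 := by
    calc ∫ h, (inner ℝ (T h Ψ) Ψ : ℝ) ∂μ
        = ∫ h, ∫ x, ψ (h • x) * ψ x ∂lam ∂μ :=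
          integral_congr_ae (Filter.Eventually.of_forall hinner)
      _ = ∫ x, ∫ h, ψ (h • x) * ψ x ∂μ ∂lam := integral_integral_swap hFint
      _ = ∫ x, (∫ h, ψ (h • x) ∂μ) * ψ x ∂lam := by
          refine integral_congr_ae (Filter.Eventually.of_forall fun x => ?_)
          dsimp only
          rw [integral_mul_const]
      _ = ∫ x, ψ x * ψ x ∂lam := by
          refine integral_congr_ae ?_
          filter_upwards [hfix] with x hx
          rw [hx]
      _ = ‖Ψ‖ ^ 2 := hnormsq
  -- a.e. invariance
  have haes : ∀ᵐ h ∂μ, T h Ψ = Ψ := by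
    have hle : ∀ h : Γ, (inner ℝ (T h Ψ) Ψ : ℝ) ≤ ‖Ψ‖ ^ 2 := by
      intro h
      calc (inner ℝ (T h Ψ) Ψ : ℝ) ≤ ‖T h Ψ‖ * ‖Ψ‖ := real_inner_le_norm _ _
        _ = ‖Ψ‖ ^ 2 := by
            rw [hTdef]
            rw [Lp.norm_compMeasurePreserving]
            ring
    have hzero : ∫ h, (‖Ψ‖ ^ 2 - inner ℝ (T h Ψ) Ψ : ℝ) ∂μ = 0 := by
      rw [integral_sub (integrable_const _) hJint, key1, integral_const]
      simp
    have h0 : (fun h => (‖Ψ‖ ^ 2 - inner ℝ (T h Ψ) Ψ : ℝ)) =ᵐ[μ] 0 :=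
      (integral_eq_zero_iff_of_nonneg (fun h => sub_nonneg.mpr (hle h))
        ((integrable_const _).sub hJint)).mp hzero
    filter_upwards [h0] with h hh
    have hinner_eq : (inner ℝ (T h Ψ) Ψ : ℝ) = ‖Ψ‖ ^ 2 := by
      have : (‖Ψ‖ ^ 2 - inner ℝ (T h Ψ) Ψ : ℝ) = 0 := hh
      linarith
    have hns : ‖T h Ψ - Ψ‖ ^ 2 = 0 := by
      rw [norm_sub_sq_real, hinner_eq]
      have : ‖T h Ψ‖ = ‖Ψ‖ := Lp.norm_compMeasurePreserving Ψ (hinv h)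
      rw [this]
      ring
    have hz := pow_eq_zero_iff (n := 2) (by norm_num) |>.mp hns
    rw [norm_eq_zero] at hz
    exact sub_eq_zero.mp hz
  -- the stabilizer subgroup
  let Ssub : Subgroup Γ :=
    { carrier := {h : Γ | T h Ψ = Ψ}
      one_mem' := hTone
      mul_mem' := by
        intro a b ha hb
        show T (a * b) Ψ = Ψ
        rw [hTmul a b Ψ, ha, hb]
      inv_mem' := by
        intro a ha
        show T a⁻¹ Ψ = Ψ
        have h1 : T (a * a⁻¹) Ψ = T a⁻¹ (T a Ψ) := hTmul a a⁻¹ Ψ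
        rw [mul_inv_cancel, hTone, ha] at h1
        exact h1.symm }
  have hSclosed : IsClosed (Ssub : Set Γ) := by
    refine isClosed_of_closure_subset fun g hg => ?_
    obtain ⟨gs, hgsS, hgs⟩ := mem_closure_iff_seq_limit.mp hg
    have hconv : ∀ x : X, Tendsto (fun n => gs n • x) atTop (nhds (g • x)) :=
      fun x => hgs.smul tendsto_const_nhds
    have hkey := key_tendsto lam hinv hconv
      (fun U hU hUfin => key_symmdiff_tendsto lam hinv hconv hU hUfin) Ψ
    have h2 : Tendsto (fun _ : ℕ => Ψ) atTop (nhds (T g Ψ)) :=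
      hkey.congr fun n => hgsS n
    show T g Ψ = Ψ
    exact (tendsto_nhds_unique h2 tendsto_const_nhds)
  have hsubset : {g : Γ | ∀ U ∈ nhds g, μ U ≠ 0} ⊆ (Ssub : Set Γ) := by
    intro g hgsupp
    by_contra hgS
    have hnhds : ((Ssub : Set Γ)ᶜ) ∈ nhds g := hSclosed.isOpen_compl.mem_nhds hgS
    refine hgsupp _ hnhds ?_
    have := ae_iff.mp haes
    exact this
  have htop : (⊤ : Subgroup Γ) ≤ Ssub := by
    rw [← hgen]
    exact Subgroup.topologicalClosure_minimal _ ((Subgroup.closure_le _).mpr hsubset) hSclosed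
  intro g
  exact (hbridge g).mp (htop (Subgroup.mem_top g))
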